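/- First-summand integral limit of the shape-derivative splitting: Let Ω ⊆ ℝ^d be a bounded open set with λ^d(∂Ω) = 0, V : ℝ^d → ℝ^d an admissible distortion, ũ : ℝ^d → ℝ of class C², w : ℝ^d → ℝ continuous, ψ : ℝ^d × ℝ → ℝ of class C¹, ε₀ > 0, and for each ε ∈ [−ε₀, ε₀] \ {0} let u_ε : ℝ^d → ℝ be Borel measurable. Assume (i) there is C ≥ 0 such that sup_{x ∈ Ω_ε} |u_ε(x) − ũ(x)| ≤ C|ε| for all such ε, and (ii) sup_{x ∈ Ω ∩ Ω_ε} |(1/ε)(u_ε(x) − ũ(x)) − w(x)| → 0 as ε → 0. Then lim_{ε→0} (1/ε) ∫_{Ω_ε} [ψ(x, u_ε(x)) − ψ(x, ũ(x))] dλ^d(x) = ∫_Ω ∂_u ψ(x, ũ(x)) · w(x) dλ^d(x), where ∂_u ψ denotes the partial derivative of ψ with respect to its second (scalar) argument. -/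

import Mathlib

open Filter MeasureTheory

open Set Metric in
lemma seg_frontier {E : Type*} [NormedAddCommGroup E] [NormedSpace ℝ E]
    {Ω : Set E} (hΩ : IsOpen Ω) {a b : E} (ha : a ∉ Ω) (hb : b ∈ Ω) :
    ∃ t ∈ Set.Icc (0:ℝ) 1, a + t • (b - a) ∈ frontier Ω := by
  set γ : ℝ → E := fun t => a + t • (b - a) with hγdef
  have hγc : Continuous γ := by continuity
  set A : Set ℝ := {t | t ∈ Set.Icc (0:ℝ) 1 ∧ γ t ∈ Ω} with hAdef
  have h1A : (1:ℝ) ∈ A := ⟨⟨zero_le_one, le_refl 1⟩, by simp [γ, hb]⟩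
  have hAne : A.Nonempty := ⟨1, h1A⟩
  have hAbdd : BddBelow A := ⟨0, fun t ht => ht.1.1⟩
  set s := sInf A with hsdef
  have hs0 : 0 ≤ s := le_csInf hAne fun t ht => ht.1.1
  have hs1 : s ≤ 1 := csInf_le hAbdd h1A
  refine ⟨s, ⟨hs0, hs1⟩, ?_⟩
  have hclos : γ s ∈ closure Ω := by
    have h1 : s ∈ closure A := csInf_mem_closure hAne hAbdd
    have h2 : γ s ∈ closure (γ '' A) :=
      (image_closure_subset_closure_image hγc) ⟨s, h1, rfl⟩
    refine closure_mono ?_ h2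
    rintro _ ⟨t, ht, rfl⟩; exact ht.2
  have hnot : γ s ∉ Ω := by
    intro hmem
    have hspos : 0 < s := by
      rcases hs0.lt_or_eq with h | h
      · exact h
      · exfalso; apply ha; simpa [γ, ← h] using hmem
    have hop : IsOpen (γ ⁻¹' Ω) := hΩ.preimage hγc
    rcases Metric.isOpen_iff.1 hop s hmem with ⟨δ, hδ, hball⟩
    set t := max (s - δ/2) 0 with htdef
    have ht_lt : t < s := max_lt (by linarith) hspos
    have ht_mem : γ t ∈ Ω := by
      apply hball
      rw [mem_ball, Real.dist_eq, abs_lt]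
      constructor
      · have : s - δ/2 ≤ t := le_max_left _ _
        linarith
      · linarith
    have htA : t ∈ A := ⟨⟨le_max_right _ _, ht_lt.le.trans hs1⟩, ht_mem⟩
    exact absurd (csInf_le hAbdd htA) (not_le.2 ht_lt)
  rw [hΩ.frontier_eq]
  exact ⟨hclos, hnot⟩

open Set Metric in
lemma symdiff_subset_cthickening {E : Type*} [NormedAddCommGroup E] [NormedSpace ℝ E]
    {Ω : Set E} (hΩ : IsOpen Ω) (V : E → E) {M : ℝ} (hM : ∀ x, ‖V x‖ ≤ M) (ε : ℝ) :
    ({y | y + ε • V y ∈ Ω} \ Ω) ∪ (Ω \ {y | y + ε • V y ∈ Ω})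
      ⊆ Metric.cthickening (|ε| * M) (frontier Ω) := by
  have hM0 : 0 ≤ M := (norm_nonneg _).trans (hM 0)
  rintro x (⟨hx1, hx2⟩ | ⟨hx1, hx2⟩)
  · obtain ⟨t, ht, hp⟩ := seg_frontier hΩ hx2 hx1
    apply mem_cthickening_of_dist_le x _ _ _ hp
    have : x + ε • V x - x = ε • V x := by abel
    rw [this, dist_eq_norm]
    have : x - (x + t • (ε • V x)) = -(t • (ε • V x)) := by abel
    rw [this, norm_neg, norm_smul, norm_smul, Real.norm_eq_abs, Real.norm_eq_abs,
      abs_of_nonneg ht.1]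
    calc t * (|ε| * ‖V x‖) ≤ 1 * (|ε| * ‖V x‖) := by
          apply mul_le_mul_of_nonneg_right ht.2; positivity
      _ = |ε| * ‖V x‖ := one_mul _
      _ ≤ |ε| * M := by apply mul_le_mul_of_nonneg_left (hM x) (abs_nonneg ε)
  · obtain ⟨t, ht, hp⟩ := seg_frontier hΩ hx2 hx1
    apply mem_cthickening_of_dist_le x _ _ _ hp
    have h1 : x - (x + ε • V x) = -(ε • V x) := by abel
    rw [h1, dist_eq_norm]
    have h2 : x - (x + ε • V x + t • -(ε • V x)) = -((1 - t) • (ε • V x)) := by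
      rw [sub_smul, one_smul, smul_neg]; abel
    rw [h2, norm_neg, norm_smul, norm_smul, Real.norm_eq_abs, Real.norm_eq_abs,
      abs_of_nonneg (by linarith [ht.2] : (0:ℝ) ≤ 1 - t)]
    calc (1 - t) * (|ε| * ‖V x‖) ≤ 1 * (|ε| * ‖V x‖) := by
          apply mul_le_mul_of_nonneg_right (by linarith [ht.1]) ; positivity
      _ = |ε| * ‖V x‖ := one_mul _
      _ ≤ |ε| * M := by apply mul_le_mul_of_nonneg_left (hM x) (abs_nonneg ε)

set_option maxHeartbeats 1000000 in
open Set Metric in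
/-- First-summand integral limit of the shape-derivative splitting. -/
theorem first_summand_integral_limit
    {d : ℕ} (Ω : Set (EuclideanSpace ℝ (Fin d)))
    (hΩ_open : IsOpen Ω) (hΩ_bdd : Bornology.IsBounded Ω)
    (hfrontier : volume (frontier Ω) = 0)
    (V : EuclideanSpace ℝ (Fin d) → EuclideanSpace ℝ (Fin d))
    (hV : ContDiff ℝ 2 V) (hVbdd : ∃ M : ℝ, ∀ x, ‖V x‖ ≤ M)
    (u' : EuclideanSpace ℝ (Fin d) → ℝ) (hu' : ContDiff ℝ 2 u')
    (w : EuclideanSpace ℝ (Fin d) → ℝ) (hw : Continuous w)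
    (ψ : EuclideanSpace ℝ (Fin d) × ℝ → ℝ) (hψ : ContDiff ℝ 1 ψ)
    (ε₀ : ℝ) (hε₀ : 0 < ε₀)
    (u : ℝ → EuclideanSpace ℝ (Fin d) → ℝ)
    (hu_meas : ∀ ε ∈ Set.Icc (-ε₀) ε₀, ε ≠ 0 → Measurable (u ε))
    (hclose : ∃ C : ℝ, 0 ≤ C ∧ ∀ ε ∈ Set.Icc (-ε₀) ε₀, ε ≠ 0 →
      ∀ x ∈ {y | y + ε • V y ∈ Ω}, |u ε x - u' x| ≤ C * |ε|)
    (hconv : ∀ η : ℝ, 0 < η → ∃ δ > (0:ℝ), ∀ ε : ℝ, 0 < |ε| → |ε| < δ →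
      ∀ x ∈ Ω ∩ {y | y + ε • V y ∈ Ω},
        |(1 / ε) * (u ε x - u' x) - w x| ≤ η) :
    Tendsto (fun ε : ℝ =>
        (1 / ε) * ∫ x in {y | y + ε • V y ∈ Ω}, (ψ (x, u ε x) - ψ (x, u' x)))
      (nhdsWithin 0 {0}ᶜ)
      (nhds (∫ x in Ω, deriv (fun v : ℝ => ψ (x, v)) (u' x) * w x)) := by
  classical
  obtain ⟨C, hC0, hclose⟩ := hclose
  obtain ⟨M, hM⟩ := hVbdd
  have hM0 : 0 ≤ M := (norm_nonneg _).trans (hM 0)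
  obtain ⟨R₀, hR₀⟩ := hΩ_bdd.subset_closedBall 0
  set R : ℝ := max R₀ 0 with hRdef
  have hR : Ω ⊆ Metric.closedBall 0 R :=
    hR₀.trans (Metric.closedBall_subset_closedBall (le_max_left _ _))
  have hR0 : 0 ≤ R := le_max_right _ _
  set K : Set (EuclideanSpace ℝ (Fin d)) := Metric.closedBall 0 (R + ε₀ * M) with hKdef
  have hKr0 : 0 ≤ R + ε₀ * M := by positivity
  have hKcomp : IsCompact K := isCompact_closedBall _ _
  have hΩK : Ω ⊆ K :=
    hR.trans (Metric.closedBall_subset_closedBall (by nlinarith))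
  have hΩεK : ∀ ε : ℝ, |ε| ≤ ε₀ → {y | y + ε • V y ∈ Ω} ⊆ K := by
    intro ε hε x hx
    have h1 : x + ε • V x ∈ Metric.closedBall 0 R := hR hx
    rw [hKdef]
    simp only [Metric.mem_closedBall, dist_zero_right] at h1 ⊢
    have h2 : ‖ε • V x‖ ≤ ε₀ * M := by
      rw [norm_smul, Real.norm_eq_abs]
      exact mul_le_mul hε (hM x) (norm_nonneg _) hε₀.le
    calc ‖x‖ = ‖(x + ε • V x) - ε • V x‖ := by congr 1; abel
      _ ≤ ‖x + ε • V x‖ + ‖ε • V x‖ := norm_sub_le _ _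
      _ ≤ R + ε₀ * M := add_le_add h1 h2
  -- finiteness of measures
  have hKfin : volume K < ⊤ := measure_closedBall_lt_top
  have hΩfin : volume Ω < ⊤ := lt_of_le_of_lt (measure_mono hΩK) hKfin
  have hΩεfin : ∀ ε : ℝ, |ε| ≤ ε₀ → volume {y | y + ε • V y ∈ Ω} < ⊤ :=
    fun ε hε => lt_of_le_of_lt (measure_mono (hΩεK ε hε)) hKfin
  have hΩεmeas : ∀ ε : ℝ, MeasurableSet {y | y + ε • V y ∈ Ω} := by
    intro ε
    exact (hΩ_open.preimage (continuous_id.add (hV.continuous.const_smul ε))).measurableSet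
  -- bound for u'
  obtain ⟨B, hB⟩ := hKcomp.exists_bound_of_continuousOn hu'.continuous.continuousOn
  have h0K : (0 : EuclideanSpace ℝ (Fin d)) ∈ K := Metric.mem_closedBall_self hKr0
  have hB0 : 0 ≤ B := (norm_nonneg _).trans (hB 0 h0K)
  -- the compact set S
  set S : Set ((EuclideanSpace ℝ (Fin d)) × ℝ) :=
    K ×ˢ Set.Icc (-(B + C * ε₀)) (B + C * ε₀) with hSdef
  have hScomp : IsCompact S := hKcomp.prod isCompact_Icc
  -- the partial derivative g
  set g : (EuclideanSpace ℝ (Fin d)) × ℝ → ℝ := fun p => fderiv ℝ ψ p (0, 1) with hgdef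
  have hg_cont : Continuous g := (hψ.continuous_fderiv one_ne_zero).clm_apply continuous_const
  have hg_deriv : ∀ (x : EuclideanSpace ℝ (Fin d)) (t : ℝ),
      HasDerivAt (fun v => ψ (x, v)) (g (x, t)) t := by
    intro x t
    have h1 : HasDerivAt (fun v : ℝ => ((x, v) : (EuclideanSpace ℝ (Fin d)) × ℝ))
        ((0 : EuclideanSpace ℝ (Fin d)), (1:ℝ)) t :=
      (hasDerivAt_const t x).prodMk (hasDerivAt_id t)
    exact (hψ.differentiable one_ne_zero (x, t)).hasFDerivAt.comp_hasDerivAt t h1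
  obtain ⟨L, hL⟩ := hScomp.exists_bound_of_continuousOn hg_cont.continuousOn
  have hBC : (0:ℝ) ≤ B + C * ε₀ := by positivity
  have h00S : ((0 : EuclideanSpace ℝ (Fin d)), (0:ℝ)) ∈ S :=
    ⟨h0K, by constructor <;> simp <;> linarith⟩
  have hL0 : 0 ≤ L := (norm_nonneg _).trans (hL _ h00S)
  -- the limit integrand F
  set F : EuclideanSpace ℝ (Fin d) → ℝ := fun x => g (x, u' x) * w x with hFdef
  have hF_cont : Continuous F :=
    (hg_cont.comp (continuous_id.prodMk hu'.continuous)).mul hw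
  obtain ⟨G, hG⟩ := hKcomp.exists_bound_of_continuousOn hF_cont.continuousOn
  have hG0 : 0 ≤ G := (norm_nonneg _).trans (hG 0 h0K)
  -- rewrite target
  have hTeq : (∫ x in Ω, deriv (fun v : ℝ => ψ (x, v)) (u' x) * w x) = ∫ x in Ω, F x := by
    apply integral_congr_ae
    filter_upwards with x
    show deriv (fun v : ℝ => ψ (x, v)) (u' x) * w x = F x
    rw [(hg_deriv x (u' x)).deriv]
  rw [hTeq]
  -- membership facts
  have hmemS : ∀ (ε : ℝ), |ε| ≤ ε₀ → ∀ x ∈ {y | y + ε • V y ∈ Ω},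
      ∀ ξ : ℝ, |ξ - u' x| ≤ C * ε₀ → (x, ξ) ∈ S := by
    intro ε hε x hx ξ hξ
    have hxK : x ∈ K := hΩεK ε hε hx
    refine ⟨hxK, ?_⟩
    have hb := hB x hxK
    rw [Real.norm_eq_abs] at hb
    have h1 := abs_le.1 hb
    have h2 := abs_le.1 hξ
    exact ⟨by cases h1; cases h2; linarith, by cases h1; cases h2; linarith⟩
  have hmemS' : ∀ (ε : ℝ), |ε| ≤ ε₀ → ε ∈ Set.Icc (-ε₀) ε₀ → ε ≠ 0 →
      ∀ x ∈ {y | y + ε • V y ∈ Ω},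
      ∀ ξ ∈ Set.Icc (min (u' x) (u ε x)) (max (u' x) (u ε x)), (x, ξ) ∈ S := by
    intro ε hε hεI hεne x hx ξ hξ
    refine hmemS ε hε x hx ξ ?_
    have hcl := hclose ε hεI hεne x hx
    have hCε : C * |ε| ≤ C * ε₀ := mul_le_mul_of_nonneg_left hε hC0
    have h2 := abs_le.1 hcl
    rcases le_total (u' x) (u ε x) with h | h
    · rw [min_eq_left h, max_eq_right h] at hξ
      rw [abs_le]; cases h2; cases hξ; constructor <;> linarith
    · rw [min_eq_right h, max_eq_left h] at hξ
      rw [abs_le]; cases h2; cases hξ; constructor <;> linarith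
  -- crude MVT bound on Ωε
  have hbnd : ∀ (ε : ℝ), |ε| ≤ ε₀ → ε ∈ Set.Icc (-ε₀) ε₀ → ε ≠ 0 →
      ∀ x ∈ {y | y + ε • V y ∈ Ω},
      |ψ (x, u ε x) - ψ (x, u' x)| ≤ L * (C * |ε|) := by
    intro ε hε hεI hεne x hx
    set a := u' x with hadef
    set b := u ε x with hbdef
    have hmvt := Convex.norm_image_sub_le_of_norm_hasDerivWithin_le
      (f := fun v => ψ (x, v)) (f' := fun ξ => g (x, ξ)) (C := L)
      (s := Set.Icc (min a b) (max a b))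
      (fun ξ _ => (hg_deriv x ξ).hasDerivWithinAt)
      (fun ξ hξ => hL _ (hmemS' ε hε hεI hεne x hx ξ hξ))
      (convex_Icc _ _)
      ⟨min_le_left _ _, le_max_left _ _⟩ ⟨min_le_right _ _, le_max_right _ _⟩
    rw [Real.norm_eq_abs, Real.norm_eq_abs] at hmvt
    calc |ψ (x, b) - ψ (x, a)| ≤ L * |b - a| := hmvt
      _ ≤ L * (C * |ε|) := mul_le_mul_of_nonneg_left (hclose ε hεI hεne x hx) hL0
  -- integrability of the difference on Ωε
  have hmeasfε : ∀ (ε : ℝ), ε ∈ Set.Icc (-ε₀) ε₀ → ε ≠ 0 →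
      Measurable (fun x => ψ (x, u ε x) - ψ (x, u' x)) := by
    intro ε hεI hεne
    exact (hψ.continuous.measurable.comp
        (measurable_id.prodMk (hu_meas ε hεI hεne))).sub
      (hψ.continuous.comp (continuous_id.prodMk hu'.continuous)).measurable
  have hintfε : ∀ (ε : ℝ), |ε| ≤ ε₀ → ε ∈ Set.Icc (-ε₀) ε₀ → ε ≠ 0 →
      IntegrableOn (fun x => ψ (x, u ε x) - ψ (x, u' x)) {y | y + ε • V y ∈ Ω} := by
    intro ε hε hεI hεne
    have hconst : IntegrableOn (fun _ => L * (C * |ε|)) {y | y + ε • V y ∈ Ω} volume :=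
      integrableOn_const (hΩεfin ε hε).ne
    refine hconst.mono' ((hmeasfε ε hεI hεne).aestronglyMeasurable) ?_
    rw [ae_restrict_iff' (hΩεmeas ε)]
    exact Filter.Eventually.of_forall fun x hx => by
      rw [Real.norm_eq_abs]; exact hbnd ε hε hεI hεne x hx
  -- integrability of F on Ω
  have hintF : IntegrableOn F Ω := by
    have hconst : IntegrableOn (fun _ => G) Ω volume :=
      integrableOn_const hΩfin.ne
    refine hconst.mono' hF_cont.aestronglyMeasurable.restrict ?_
    rw [ae_restrict_iff' hΩ_open.measurableSet]
    exact Filter.Eventually.of_forall fun x hx => hG x (hΩK hx)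
  -- main ε-δ argument
  rw [Metric.tendsto_nhdsWithin_nhds]
  intro η hη
  set vΩ : ℝ := (volume Ω).toReal with hvΩdef
  have hvΩ0 : 0 ≤ vΩ := ENNReal.toReal_nonneg
  set η' : ℝ := η / (4 * (C + L + 1) * (vΩ + 1)) with hη'def
  have hη'pos : 0 < η' := by positivity
  set q : ℝ := η / (4 * (L * C + G + 1)) with hqdef
  have hqpos : 0 < q := by positivity
  -- uniform continuity of g on S
  have hUC := hScomp.uniformContinuousOn_of_continuous hg_cont.continuousOn
  rw [Metric.uniformContinuousOn_iff] at hUC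
  obtain ⟨δg, hδg, hUC⟩ := hUC η' hη'pos
  obtain ⟨δc, hδc, hconv'⟩ := hconv η' hη'pos
  -- frontier thickening measure small
  have hcompFr : IsCompact (frontier Ω) :=
    Metric.isCompact_of_isClosed_isBounded isClosed_frontier
      (hΩ_bdd.closure.subset frontier_subset_closure)
  have htm := tendsto_measure_cthickening_of_isCompact (μ := volume) hcompFr
  rw [hfrontier] at htm
  have hev : ∀ᶠ r in nhds (0:ℝ),
      volume (Metric.cthickening r (frontier Ω)) < ENNReal.ofReal q :=
    htm.eventually_lt_const (by simp [ENNReal.ofReal_pos, hqpos])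
  obtain ⟨δm, hδm, hm⟩ := Metric.eventually_nhds_iff.1 hev
  refine ⟨min (min ε₀ δc) (min (δg / (C+1)) (δm / (M+1))), by positivity, ?_⟩
  intro ε hεmem hεdist
  have hεne : ε ≠ 0 := hεmem
  have hε0 : 0 < |ε| := abs_pos.2 hεne
  rw [Real.dist_eq, sub_zero] at hεdist
  have hεd1 : |ε| < ε₀ := lt_of_lt_of_le hεdist ((min_le_left _ _).trans (min_le_left _ _))
  have hε1 : |ε| ≤ ε₀ := hεd1.le
  have hεI : ε ∈ Set.Icc (-ε₀) ε₀ := by rw [Set.mem_Icc, ← abs_le]; exact hε1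
  have hε2 : |ε| < δc := lt_of_lt_of_le hεdist ((min_le_left _ _).trans (min_le_right _ _))
  have hε3 : C * |ε| < δg := by
    have h := lt_of_lt_of_le hεdist ((min_le_right _ _).trans (min_le_left _ _))
    have h2 := (lt_div_iff₀ (by positivity : (0:ℝ) < C + 1)).1 h
    nlinarith [abs_nonneg ε]
  have hε4 : |ε| * M < δm := by
    have h := lt_of_lt_of_le hεdist ((min_le_right _ _).trans (min_le_right _ _))
    have h2 := (lt_div_iff₀ (by positivity : (0:ℝ) < M + 1)).1 h
    nlinarith [abs_nonneg ε]
  set Ωε : Set (EuclideanSpace ℝ (Fin d)) := {y | y + ε • V y ∈ Ω} with hΩεdef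
  set fε : EuclideanSpace ℝ (Fin d) → ℝ := fun x => ψ (x, u ε x) - ψ (x, u' x) with hfεdef
  -- symmetric difference measure bounds
  have hsub := symdiff_subset_cthickening hΩ_open V hM ε
  have hthick : volume (Metric.cthickening (|ε| * M) (frontier Ω)) < ENNReal.ofReal q := by
    apply hm
    rw [Real.dist_eq, sub_zero, abs_of_nonneg (by positivity)]
    exact hε4
  have hm1 : (volume (Ωε \ Ω)).toReal < q := by
    refine ENNReal.toReal_lt_of_lt_ofReal (lt_of_le_of_lt ?_ hthick)
    exact measure_mono fun x hx => hsub (Or.inl hx)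
  have hm2 : (volume (Ω \ Ωε)).toReal < q := by
    refine ENNReal.toReal_lt_of_lt_ofReal (lt_of_le_of_lt ?_ hthick)
    exact measure_mono fun x hx => hsub (Or.inr hx)
  -- split integrals
  have hdisj1 : Disjoint (Ωε ∩ Ω) (Ωε \ Ω) :=
    Set.disjoint_left.2 fun x hx1 hx2 => hx2.2 hx1.2
  have hdisj2 : Disjoint (Ω ∩ Ωε) (Ω \ Ωε) :=
    Set.disjoint_left.2 fun x hx1 hx2 => hx2.2 hx1.2
  have hmeasd1 : MeasurableSet (Ωε \ Ω) := (hΩεmeas ε).diff hΩ_open.measurableSet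
  have hmeasd2 : MeasurableSet (Ω \ Ωε) := hΩ_open.measurableSet.diff (hΩεmeas ε)
  have hintfε' := hintfε ε hε1 hεI hεne
  have hsplit1 : (∫ x in Ωε, fε x) = (∫ x in Ωε ∩ Ω, fε x) + ∫ x in Ωε \ Ω, fε x := by
    rw [← setIntegral_union hdisj1 hmeasd1
      (hintfε'.mono_set Set.inter_subset_left) (hintfε'.mono_set Set.diff_subset),
      Set.inter_union_diff]
  have hsplit2 : (∫ x in Ω, F x) = (∫ x in Ω ∩ Ωε, F x) + ∫ x in Ω \ Ωε, F x := by
    rw [← setIntegral_union hdisj2 hmeasd2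
      (hintF.mono_set Set.inter_subset_left) (hintF.mono_set Set.diff_subset),
      Set.inter_union_diff]
  have hintercomm : Ωε ∩ Ω = Ω ∩ Ωε := Set.inter_comm _ _
  -- term 1 : combined integral over the intersection
  have hterm1 : |(1/ε) * (∫ x in Ω ∩ Ωε, fε x) - ∫ x in Ω ∩ Ωε, F x| ≤ η / 4 := by
    have hcomb : (1/ε) * (∫ x in Ω ∩ Ωε, fε x) - (∫ x in Ω ∩ Ωε, F x)
        = ∫ x in Ω ∩ Ωε, ((1/ε) * fε x - F x) := by
      rw [integral_sub ((hintfε'.mono_set (hintercomm ▸ Set.inter_subset_left)).const_mul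
            (1/ε)) (hintF.mono_set Set.inter_subset_left), integral_const_mul]
    rw [hcomb]
    have hptwise : ∀ x ∈ Ω ∩ Ωε, ‖(1/ε) * fε x - F x‖ ≤ η' * (C + L) := by
      intro x hx
      set a := u' x with hadef
      set b := u ε x with hbdef
      -- refined MVT estimate
      have hd : ∀ ξ, HasDerivAt (fun v => ψ (x, v) - g (x, a) * v)
          (g (x, ξ) - g (x, a)) ξ := by
        intro ξ
        have h2 := (hasDerivAt_id ξ).const_mul (g (x, a))
        rw [mul_one] at h2
        exact (hg_deriv x ξ).sub h2
      have hba : |b - a| ≤ C * |ε| := hclose ε hεI hεne x hx.2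
      have hbaδ : |b - a| < δg := lt_of_le_of_lt hba hε3
      have hmvt := Convex.norm_image_sub_le_of_norm_hasDerivWithin_le
        (f := fun v => ψ (x, v) - g (x, a) * v)
        (f' := fun ξ => g (x, ξ) - g (x, a)) (C := η')
        (s := Set.Icc (min a b) (max a b))
        (fun ξ _ => (hd ξ).hasDerivWithinAt)
        (fun ξ hξ => by
          have hξa : |ξ - a| ≤ |b - a| := by
            have k1 := le_abs_self (b - a)
            have k2 := neg_abs_le (b - a)
            have k3 := abs_nonneg (b - a)
            rcases le_total a b with h | h
            · rw [min_eq_left h, max_eq_right h] at hξ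
              rw [abs_le]
              exact ⟨by linarith [hξ.1], by linarith [hξ.2]⟩
            · rw [min_eq_right h, max_eq_left h] at hξ
              rw [abs_le]
              exact ⟨by linarith [hξ.1], by linarith [hξ.2]⟩
          have hin1 : (x, ξ) ∈ S := hmemS' ε hε1 hεI hεne x hx.2 ξ hξ
          have hin2 : (x, a) ∈ S := hmemS ε hε1 x hx.2 a (by rw [hadef, sub_self, abs_zero]; positivity)
          have hdist : dist ((x, ξ) : (EuclideanSpace ℝ (Fin d)) × ℝ) (x, a) < δg := by
            rw [Prod.dist_eq]
            simp only [dist_self]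
            rw [max_eq_right dist_nonneg, Real.dist_eq]
            exact lt_of_le_of_lt hξa hbaδ
          have := hUC _ hin1 _ hin2 hdist
          rw [Real.dist_eq] at this
          rw [Real.norm_eq_abs]
          exact this.le)
        (convex_Icc _ _)
        ⟨min_le_left _ _, le_max_left _ _⟩ ⟨min_le_right _ _, le_max_right _ _⟩
      rw [Real.norm_eq_abs, Real.norm_eq_abs] at hmvt
      have hmvt' : |ψ (x, b) - ψ (x, a) - g (x, a) * (b - a)| ≤ η' * (C * |ε|) := by
        have h1 : ψ (x, b) - g (x, a) * b - (ψ (x, a) - g (x, a) * a)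
            = ψ (x, b) - ψ (x, a) - g (x, a) * (b - a) := by ring
        rw [h1] at hmvt
        calc |ψ (x, b) - ψ (x, a) - g (x, a) * (b - a)| ≤ η' * |b - a| := hmvt
          _ ≤ η' * (C * |ε|) := mul_le_mul_of_nonneg_left hba hη'pos.le
      have hconv2 := hconv' ε hε0 hε2 x hx
      have hgL : |g (x, a)| ≤ L := by
        have := hL (x, a) (hmemS ε hε1 x hx.2 a (by rw [hadef, sub_self, abs_zero]; positivity))
        rwa [Real.norm_eq_abs] at this
      have hkey : (1/ε) * fε x - F x
          = (1/ε) * ((ψ (x, b) - ψ (x, a)) - g (x, a) * (b - a))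
            + g (x, a) * ((1/ε) * (b - a) - w x) := by
        simp only [hfεdef, hFdef, hadef, hbdef]
        ring
      rw [Real.norm_eq_abs, hkey]
      have h1ε : |1/ε| * |ε| = 1 := by
        rw [abs_div, abs_one]
        exact one_div_mul_cancel (ne_of_gt hε0)
      calc |(1/ε) * ((ψ (x, b) - ψ (x, a)) - g (x, a) * (b - a))
            + g (x, a) * ((1/ε) * (b - a) - w x)|
          ≤ |(1/ε)| * |(ψ (x, b) - ψ (x, a)) - g (x, a) * (b - a)|
            + |g (x, a)| * |(1/ε) * (b - a) - w x| := by
            refine (abs_add_le _ _).trans (add_le_add ?_ ?_)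
            · rw [abs_mul]
            · rw [abs_mul]
        _ ≤ |(1/ε)| * (η' * (C * |ε|)) + L * η' := by
            refine add_le_add ?_ ?_
            · exact mul_le_mul_of_nonneg_left hmvt' (abs_nonneg _)
            · exact mul_le_mul hgL hconv2 (abs_nonneg _) hL0
        _ = η' * C * (|1/ε| * |ε|) + L * η' := by ring
        _ = η' * (C + L) := by rw [h1ε]; ring
    have hmi : volume (Ω ∩ Ωε) < ⊤ :=
      lt_of_le_of_lt (measure_mono Set.inter_subset_left) hΩfin
    have hInt := norm_setIntegral_le_of_norm_le_const (μ := volume) hmi hptwise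
    rw [Real.norm_eq_abs] at hInt
    have hvle : (volume (Ω ∩ Ωε)).toReal ≤ vΩ :=
      ENNReal.toReal_mono hΩfin.ne (measure_mono Set.inter_subset_left)
    have hq4 : η' * ((C + L + 1) * (vΩ + 1)) = η / 4 := by
      rw [hη'def]; field_simp
    calc |∫ x in Ω ∩ Ωε, ((1/ε) * fε x - F x)| ≤ η' * (C + L) * (volume (Ω ∩ Ωε)).toReal :=
          hInt
      _ ≤ η' * (C + L) * vΩ := by
          apply mul_le_mul_of_nonneg_left hvle; positivity
      _ ≤ η' * ((C + L + 1) * (vΩ + 1)) := by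
          nlinarith [mul_nonneg hη'pos.le (show (0:ℝ) ≤ C + L + vΩ + 1 by linarith)]
      _ = η / 4 := hq4
  -- term 2
  have hterm2 : |(1/ε) * ∫ x in Ωε \ Ω, fε x| ≤ η / 4 := by
    have hInt := norm_setIntegral_le_of_norm_le_const (μ := volume)
      (s := Ωε \ Ω) (f := fε)
      (lt_of_le_of_lt (measure_mono Set.diff_subset) (hΩεfin ε hε1))
      (fun x hx => by
        rw [Real.norm_eq_abs]; exact hbnd ε hε1 hεI hεne x hx.1)
    rw [Real.norm_eq_abs] at hInt
    rw [abs_mul, abs_div, abs_one]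
    have hb1 : |∫ x in Ωε \ Ω, fε x| ≤ L * (C * |ε|) * (volume (Ωε \ Ω)).toReal := hInt
    have hb2 : (1/|ε|) * (L * (C * |ε|) * (volume (Ωε \ Ω)).toReal)
        = L * C * (volume (Ωε \ Ω)).toReal := by
      field_simp
    calc (1/|ε|) * |∫ x in Ωε \ Ω, fε x| ≤ (1/|ε|) * (L * (C * |ε|) * (volume (Ωε \ Ω)).toReal) := by
          apply mul_le_mul_of_nonneg_left hb1; positivity
      _ = L * C * (volume (Ωε \ Ω)).toReal := hb2
      _ ≤ (L * C + G + 1) * q := by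
          have h := mul_le_mul_of_nonneg_left hm1.le (mul_nonneg hL0 hC0)
          nlinarith [mul_nonneg (show (0:ℝ) ≤ G + 1 by linarith) hqpos.le]
      _ = η / 4 := by
          have hne : (L * C + G + 1) ≠ 0 := by positivity
          rw [hqdef]; field_simp
  -- term 3
  have hterm3 : |∫ x in Ω \ Ωε, F x| ≤ η / 4 := by
    have hInt := norm_setIntegral_le_of_norm_le_const (μ := volume)
      (s := Ω \ Ωε) (f := F)
      (lt_of_le_of_lt (measure_mono Set.diff_subset) hΩfin)
      (fun x hx => hG x (hΩK hx.1))
    rw [Real.norm_eq_abs] at hInt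
    calc |∫ x in Ω \ Ωε, F x| ≤ G * (volume (Ω \ Ωε)).toReal := hInt
      _ ≤ (L * C + G + 1) * q := by
          have h := mul_le_mul_of_nonneg_left hm2.le hG0
          nlinarith [mul_nonneg (show (0:ℝ) ≤ L * C + 1 by positivity) hqpos.le]
      _ = η / 4 := by
          have hne : (L * C + G + 1) ≠ 0 := by positivity
          rw [hqdef]; field_simp
  -- assemble
  rw [Real.dist_eq]
  have hdecomp : (1/ε) * (∫ x in Ωε, fε x) - (∫ x in Ω, F x)
      = ((1/ε) * (∫ x in Ω ∩ Ωε, fε x) - ∫ x in Ω ∩ Ωε, F x)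
        + (1/ε) * (∫ x in Ωε \ Ω, fε x) - ∫ x in Ω \ Ωε, F x := by
    rw [hsplit1, hsplit2, hintercomm]
    ring
  calc |(1/ε) * (∫ x in Ωε, fε x) - (∫ x in Ω, F x)|
      = |((1/ε) * (∫ x in Ω ∩ Ωε, fε x) - ∫ x in Ω ∩ Ωε, F x)
        + (1/ε) * (∫ x in Ωε \ Ω, fε x) - ∫ x in Ω \ Ωε, F x| := by rw [hdecomp]
    _ ≤ |((1/ε) * (∫ x in Ω ∩ Ωε, fε x) - ∫ x in Ω ∩ Ωε, F x)
        + (1/ε) * (∫ x in Ωε \ Ω, fε x)| + |∫ x in Ω \ Ωε, F x| := abs_sub _ _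
    _ ≤ |(1/ε) * (∫ x in Ω ∩ Ωε, fε x) - ∫ x in Ω ∩ Ωε, F x|
        + |(1/ε) * (∫ x in Ωε \ Ω, fε x)| + |∫ x in Ω \ Ωε, F x| := by
        have := abs_add_le ((1/ε) * (∫ x in Ω ∩ Ωε, fε x) - ∫ x in Ω ∩ Ωε, F x)
          ((1/ε) * (∫ x in Ωε \ Ω, fε x))
        linarith
    _ ≤ η / 4 + η / 4 + η / 4 := by
        have := hterm1; have := hterm2; have := hterm3; linarith
    _ < η := by linarith
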